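/- Let k ≥ 2 be an integer and let T = (V,E) be a finite tree with |V| ≥ k. Every connected uniform k-partition of T (i.e., a connected k-partition whose size tuple is lexicographically largest among all connected k-partitions of T) is a connected generalized k-community structure of T. -/

import Mathlib

/-- The set of neighbours of `v` lying in `C`. -/
def nbrsIn {V : Type*} [DecidableEq V] (G : SimpleGraph V) [DecidableRel G.Adj]
    (C : Finset V) (v : V) : Finset V :=
  C.filter (fun w => G.Adj v w)

/-- A connected `k`-partition of `G`: a partition of the vertex set into `k` nonempty
sets, each inducing a connected subgraph. -/
def IsConnKPartition {V : Type*} [Fintype V] [DecidableEq V] (G : SimpleGraph V)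
    {k : ℕ} (C : Fin k → Finset V) : Prop :=
  (∀ i, (C i).Nonempty) ∧
  (∀ i j, i ≠ j → Disjoint (C i) (C j)) ∧
  (∀ v : V, ∃ i, v ∈ C i) ∧
  (∀ i, (G.induce (↑(C i) : Set V)).Connected)

/-- The size tuple of a `k`-partition: the list of part sizes in nondecreasing order. -/
def sizeTuple {V : Type*} [DecidableEq V] {k : ℕ} (C : Fin k → Finset V) : List ℕ :=
  (Multiset.map (fun i => (C i).card) (Finset.univ : Finset (Fin k)).val).sort (· ≤ ·)

/-- A generalized `k`-community structure of `G`. -/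
def IsGenKComm {V : Type*} [Fintype V] [DecidableEq V] (G : SimpleGraph V) [DecidableRel G.Adj]
    {k : ℕ} (C : Fin k → Finset V) : Prop :=
  (∀ i, (C i).Nonempty) ∧
  (∀ i j, i ≠ j → Disjoint (C i) (C j)) ∧
  (∀ v : V, ∃ i, v ∈ C i) ∧
  (∀ i j, i ≠ j → ∀ v ∈ C i,
    (nbrsIn G (C j) v).card * ((C i).card - 1) ≤ (nbrsIn G (C i) v).card * (C j).card)

open SimpleGraph Finset

section Aux

variable {V : Type*} (G : SimpleGraph V)

/-- Lift a walk of `G` whose support lies in `s` to reachability in the induced graph. -/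
lemma aux_reachable_induce {s : Set V} :
    ∀ {a b : V} (w : G.Walk a b), (∀ y ∈ w.support, y ∈ s) →
      ∀ (ha : a ∈ s) (hb : b ∈ s), (G.induce s).Reachable ⟨a, ha⟩ ⟨b, hb⟩ := by
  intro a b w
  induction w with
  | nil => intro _ ha hb; exact Reachable.refl _
  | @cons a c b h p ih =>
      intro hsup ha hb
      have hc : c ∈ s := hsup c (by simp)
      refine Reachable.trans (Adj.reachable ?_) (ih ?_ hc hb)
      · exact h
      · intro y hy; exact hsup y (by simp [hy])

lemma aux_connected_of_walks (s : Finset V) (x0 : V) (hx0 : x0 ∈ s)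
    (h : ∀ x ∈ s, ∃ w : G.Walk x0 x, ∀ y ∈ w.support, y ∈ s) :
    (G.induce (↑s : Set V)).Connected := by
  rw [connected_iff]
  constructor
  · rintro ⟨a, ha⟩ ⟨b, hb⟩
    obtain ⟨wa, hwa⟩ := h a ha
    obtain ⟨wb, hwb⟩ := h b hb
    exact (aux_reachable_induce G wa hwa hx0 ha).symm.trans
      (aux_reachable_induce G wb hwb hx0 hb)
  · exact ⟨⟨x0, hx0⟩⟩

lemma aux_walk_in_of_connected {s : Finset V} (hconn : (G.induce (↑s : Set V)).Connected)
    {a b : V} (ha : a ∈ s) (hb : b ∈ s) :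
    ∃ w : G.Walk a b, ∀ y ∈ w.support, y ∈ s := by
  obtain ⟨w⟩ := hconn.preconnected ⟨a, ha⟩ ⟨b, hb⟩
  refine ⟨w.map (SimpleGraph.Embedding.induce (↑s : Set V)).toHom, ?_⟩
  intro y hy
  replace hy : y ∈ w.support.map (SimpleGraph.Embedding.induce (G := G) (↑s : Set V)).toHom := by
    rw [← Walk.support_map]; exact hy
  rw [List.mem_map] at hy
  obtain ⟨⟨z, hz⟩, _, rfl⟩ := hy
  exact hz

/-- In a tree, a vertex outside a connected set has at most one neighbour inside it. -/
lemma aux_card_nbrsIn_le_one [DecidableEq V] [DecidableRel G.Adj] (hT : G.IsTree)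
    {s : Finset V} (hconn : (G.induce (↑s : Set V)).Connected) {v : V} (hv : v ∉ s) :
    (nbrsIn G s v).card ≤ 1 := by
  rw [Finset.card_le_one]
  intro w1 h1 w2 h2
  rw [nbrsIn, Finset.mem_filter] at h1 h2
  by_contra hne
  obtain ⟨w, hw⟩ := aux_walk_in_of_connected G hconn h1.1 h2.1
  set Q := w.toPath with hQdef
  have hQsup : ∀ y ∈ Q.val.support, y ∈ s := fun y hy => hw y (w.support_toPath_subset hy)
  have hvQ : v ∉ Q.val.support := fun hvs => hv (hQsup v hvs)
  have hP1 : (Walk.cons h1.2 Q.val).IsPath := (Walk.cons_isPath_iff _ _).2 ⟨Q.2, hvQ⟩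
  have hP2 : (Walk.cons h2.2 Walk.nil).IsPath := by
    simp [Walk.cons_isPath_iff, h2.2.ne]
  have hpaths := SimpleGraph.isAcyclic_iff_path_unique.mp hT.IsAcyclic
    ⟨_, hP1⟩ ⟨_, hP2⟩
  have hsup : (Walk.cons h1.2 Q.val).support = (Walk.cons h2.2 Walk.nil).support := by
    rw [show (Walk.cons h1.2 Q.val) = (Walk.cons h2.2 Walk.nil) from congrArg Subtype.val hpaths]
  have hw1 : w1 ∈ (Walk.cons h1.2 Q.val).support := by
    rw [Walk.support_cons]
    exact List.mem_cons_of_mem _ Q.val.start_mem_support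
  rw [hsup] at hw1
  simp only [Walk.support_cons, Walk.support_nil, List.mem_cons, List.mem_singleton] at hw1
  rcases hw1 with h | h | h
  · exact hv (h ▸ h1.1)
  · exact hne h
  · simp at h

/-- Lexicographic comparison of sorted lists from counting. -/
lemma aux_lex_of_counts :
    ∀ (A B : List ℕ), A.Pairwise (· ≤ ·) → B.Pairwise (· ≤ ·) → A.length = B.length →
      ∀ (t0 : ℕ), (∀ t ≤ t0, B.countP (· ≤ t) ≤ A.countP (· ≤ t)) →
      B.countP (· ≤ t0) < A.countP (· ≤ t0) → List.Lex (· < ·) A B := by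
  intro A
  induction A with
  | nil =>
      intro B _ _ _ t0 _ hstrict
      simp at hstrict
  | cons a A ih =>
      intro B hA hB hlen t0 hle hstrict
      cases B with
      | nil => simp at hlen
      | cons b B =>
          rcases lt_trichotomy a b with hab | hab | hab
          · exact List.Lex.rel hab
          · subst hab
            refine List.Lex.cons (ih B hA.of_cons hB.of_cons (by simpa using hlen) t0 ?_ ?_)
            · intro t ht
              have := hle t ht
              simp only [List.countP_cons] at this
              omega
            · have := hstrict
              simp only [List.countP_cons] at this
              omega
          · exfalso
            have hAzero : ∀ t, t < a → (a :: A).countP (· ≤ t) = 0 := by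
              intro t ht
              rw [List.countP_eq_zero]
              intro x hx
              have hax : a ≤ x := by
                rcases List.mem_cons.mp hx with rfl | hx'
                · exact le_refl x
                · exact (List.pairwise_cons.mp hA).1 x hx'
              simp only [decide_eq_true_eq]
              omega
            by_cases hbt0 : b ≤ t0
            · have h1 := hle b hbt0
              have h2 : 1 ≤ (b :: B).countP (· ≤ b) := by
                simp [List.countP_cons]
              have h3 : (a :: A).countP (· ≤ b) = 0 := hAzero b hab
              omega
            · push_neg at hbt0
              have h3 : (a :: A).countP (· ≤ t0) = 0 := hAzero t0 (by omega)
              have h4 : (b :: B).countP (· ≤ t0) = 0 := by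
                rw [List.countP_eq_zero]
                intro x hx
                have hbx : b ≤ x := by
                  rcases List.mem_cons.mp hx with rfl | hx'
                  · exact le_refl x
                  · exact (List.pairwise_cons.mp hB).1 x hx'
                simp only [decide_eq_true_eq]
                omega
              omega

/-- `AuxPred G v s x u` : there is a path from `v` to `x` whose second vertex is `u` and
whose tail stays in `s`. -/
def AuxPred {V : Type*} (G : SimpleGraph V) (v : V) (s : Finset V) (x u : V) : Prop :=
  ∃ (h : G.Adj v u) (t : G.Walk u x), (Walk.cons h t).IsPath ∧ ∀ y ∈ t.support, y ∈ s

lemma aux_walk_decomp {a b : V} (hne : a ≠ b) (w : G.Walk a b) :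
    ∃ (c : V) (h : G.Adj a c) (t : G.Walk c b), w = Walk.cons h t := by
  cases w with
  | nil => exact absurd rfl hne
  | cons h t => exact ⟨_, h, t, rfl⟩

lemma aux_pred_unique (hT : G.IsAcyclic) {v x u u' : V} {s s' : Finset V}
    (h1 : AuxPred G v s x u) (h2 : AuxPred G v s' x u') : u = u' := by
  obtain ⟨ha1, t1, hp1, -⟩ := h1
  obtain ⟨ha2, t2, hp2, -⟩ := h2
  have hpq := SimpleGraph.isAcyclic_iff_path_unique.mp hT ⟨_, hp1⟩ ⟨_, hp2⟩
  have hweq : Walk.cons ha1 t1 = Walk.cons ha2 t2 := congrArg Subtype.val hpq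
  have := congrArg (fun w : G.Walk v x => w.getVert 1) hweq
  simpa [Walk.getVert_cons_succ, Walk.getVert_zero] using this

lemma aux_pred_exists [DecidableEq V] {s : Finset V}
    (hconn : (G.induce (↑s : Set V)).Connected) {v x : V} (hv : v ∈ s) (hx : x ∈ s)
    (hne : x ≠ v) : ∃ u, AuxPred G v (s.erase v) x u := by
  obtain ⟨w, hw⟩ := aux_walk_in_of_connected G hconn hv hx
  set Q := w.toPath with hQ
  have hQsup : ∀ y ∈ Q.val.support, y ∈ s := fun y hy => hw y (w.support_toPath_subset hy)
  obtain ⟨u, h, t, ht⟩ := aux_walk_decomp G (Ne.symm hne) Q.val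
  have hQpath : (Walk.cons h t).IsPath := ht ▸ Q.2
  have hvt : v ∉ t.support := ((Walk.cons_isPath_iff _ _).mp hQpath).2
  refine ⟨u, h, t, hQpath, fun y hy => Finset.mem_erase.mpr ⟨?_, ?_⟩⟩
  · rintro rfl; exact hvt hy
  · apply hQsup; rw [ht, Walk.support_cons]; exact List.mem_cons_of_mem _ hy

lemma aux_pred_self {v u : V} {s : Finset V} (h : G.Adj v u) (hu : u ∈ s) :
    AuxPred G v s u u := by
  refine ⟨h, Walk.nil, ?_, ?_⟩
  · rw [Walk.cons_isPath_iff]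
    exact ⟨Walk.IsPath.nil, by simp [h.ne]⟩
  · simp [hu]

lemma aux_pred_walk [DecidableEq V] {v x u : V} {s : Finset V} (h : AuxPred G v s x u) :
    ∃ t : G.Walk u x, (∀ y ∈ t.support, y ∈ s) ∧ ∀ y ∈ t.support, AuxPred G v s y u := by
  obtain ⟨ha, t, hp, hs⟩ := h
  have hp' := (Walk.cons_isPath_iff _ _).mp hp
  refine ⟨t, hs, fun y hy => ?_⟩
  refine ⟨ha, t.takeUntil y hy, ?_, fun z hz => hs z (t.support_takeUntil_subset hy hz)⟩
  rw [Walk.cons_isPath_iff]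
  exact ⟨hp'.1.takeUntil hy, fun hv' => hp'.2 (t.support_takeUntil_subset hy hv')⟩

end Aux

/-- Every connected uniform `k`-partition of a tree (one whose size tuple is
lexicographically largest among all connected `k`-partitions) is a connected
generalized `k`-community structure. -/
theorem stmt_8 {V : Type*} [Fintype V] [DecidableEq V] (G : SimpleGraph V) [DecidableRel G.Adj]
    (htree : G.IsTree) {k : ℕ} (hk : 2 ≤ k) (hcard : k ≤ Fintype.card V)
    (C : Fin k → Finset V) (hC : IsConnKPartition G C)
    (huniform : ∀ C' : Fin k → Finset V, IsConnKPartition G C' →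
      ¬ List.Lex (· < ·) (sizeTuple C) (sizeTuple C')) :
    IsGenKComm G C := by
  obtain ⟨hne, hdisj, hcover, hconn⟩ := hC
  refine ⟨hne, hdisj, hcover, ?_⟩
  intro i j hij v hv
  classical
  by_contra hcontra
  push_neg at hcontra
  have hvj : v ∉ C j := fun h => (Finset.disjoint_left.mp (hdisj i j hij)) hv h
  have hnJ : (nbrsIn G (C j) v).card ≤ 1 := aux_card_nbrsIn_le_one G htree (hconn j) hvj
  have hnJ1 : (nbrsIn G (C j) v).card = 1 := by
    have h0 : (nbrsIn G (C j) v).card ≠ 0 := by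
      intro h; rw [h, zero_mul] at hcontra; omega
    omega
  rw [hnJ1, one_mul] at hcontra
  obtain ⟨w0, hw0⟩ := Finset.card_eq_one.mp hnJ1
  have hw0m : w0 ∈ C j ∧ G.Adj v w0 := by
    have : w0 ∈ nbrsIn G (C j) v := by rw [hw0]; exact Finset.mem_singleton_self w0
    exact Finset.mem_filter.mp this
  set s0 := (C i).erase v with hs0def
  have hs0card : s0.card = (C i).card - 1 := Finset.card_erase_of_mem hv
  have hchoice : ∀ x : V, ∃ u, x ∈ s0 → AuxPred G v s0 x u := by
    intro x
    by_cases hx : x ∈ s0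
    · obtain ⟨hxv, hxi⟩ := Finset.mem_erase.mp hx
      obtain ⟨u, hu⟩ := aux_pred_exists G (hconn i) hv hxi hxv
      exact ⟨u, fun _ => hu⟩
    · exact ⟨v, fun h => absurd h hx⟩
  choose f hf using hchoice
  have hfeq : ∀ x ∈ s0, ∀ u', AuxPred G v s0 x u' → f x = u' :=
    fun x hx u' hp => aux_pred_unique G htree.IsAcyclic (hf x hx) hp
  have hmaps : ∀ x ∈ s0, f x ∈ nbrsIn G (C i) v := by
    intro x hx
    obtain ⟨ha, t, hp, hs⟩ := hf x hx
    have hfx : f x ∈ s0 := hs (f x) t.start_mem_support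
    rw [hs0def] at hfx
    exact Finset.mem_filter.mpr ⟨Finset.mem_of_mem_erase hfx, ha⟩
  obtain ⟨u, humem, hAcard⟩ :=
    Finset.exists_lt_card_fiber_of_mul_lt_card_of_maps_to hmaps
      (by rw [hs0card]; exact hcontra)
  set A := s0.filter (fun x => f x = u) with hAdef
  have hAs0 : A ⊆ s0 := Finset.filter_subset _ _
  have hACi : A ⊆ C i := by
    intro x hx
    have := hAs0 hx
    rw [hs0def] at this
    exact Finset.mem_of_mem_erase this
  have humem' := Finset.mem_filter.mp humem
  have hus0 : u ∈ s0 := by rw [hs0def]; exact Finset.mem_erase.mpr ⟨humem'.2.ne', humem'.1⟩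
  have huA : u ∈ A :=
    Finset.mem_filter.mpr ⟨hus0, hfeq u hus0 u (aux_pred_self G humem'.2 hus0)⟩
  have hvA : v ∉ A := by
    intro h
    have := hAs0 h
    rw [hs0def] at this
    exact (Finset.mem_erase.mp this).1 rfl
  have hwalksA : ∀ x ∈ A, ∃ w : G.Walk u x, ∀ y ∈ w.support, y ∈ A := by
    intro x hx
    obtain ⟨hxs0, hfx⟩ := Finset.mem_filter.mp hx
    have hp : AuxPred G v s0 x u := hfx ▸ hf x hxs0
    obtain ⟨t, hts, htA⟩ := aux_pred_walk G hp
    exact ⟨t, fun y hy => Finset.mem_filter.mpr ⟨hts y hy, hfeq y (hts y hy) u (htA y hy)⟩⟩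
  have hconnA : (G.induce (↑A : Set V)).Connected := aux_connected_of_walks G A u huA hwalksA
  have hwalksB : ∀ x ∈ C i \ A, ∃ w : G.Walk v x, ∀ y ∈ w.support, y ∈ C i \ A := by
    intro x hx
    obtain ⟨hxi, hxA⟩ := Finset.mem_sdiff.mp hx
    by_cases hxv : x = v
    · subst hxv
      exact ⟨Walk.nil, by simp [hxi, hxA]⟩
    · have hxs0 : x ∈ s0 := by rw [hs0def]; exact Finset.mem_erase.mpr ⟨hxv, hxi⟩
      have hp := hf x hxs0
      have hfxu : f x ≠ u := fun h => hxA (Finset.mem_filter.mpr ⟨hxs0, h⟩)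
      obtain ⟨t, hts, htA⟩ := aux_pred_walk G hp
      obtain ⟨ha, -, -⟩ := hp
      refine ⟨Walk.cons ha t, ?_⟩
      intro y hy
      rw [Walk.support_cons] at hy
      rcases List.mem_cons.mp hy with rfl | hy'
      · exact Finset.mem_sdiff.mpr ⟨hv, hvA⟩
      · refine Finset.mem_sdiff.mpr ⟨?_, ?_⟩
        · have := hts y hy'; rw [hs0def] at this; exact Finset.mem_of_mem_erase this
        · intro hyA
          have h1 : f y = u := (Finset.mem_filter.mp hyA).2
          have h2 : f y = f x := hfeq y (hts y hy') (f x) (htA y hy')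
          exact hfxu (h2 ▸ h1)
  set B := C j ∪ (C i \ A) with hBdef
  have hvB : v ∈ B := Finset.mem_union_right _ (Finset.mem_sdiff.mpr ⟨hv, hvA⟩)
  have hwalksBall : ∀ x ∈ B, ∃ w : G.Walk v x, ∀ y ∈ w.support, y ∈ B := by
    intro x hx
    rcases Finset.mem_union.mp hx with hxj | hxB
    · obtain ⟨w, hw⟩ := aux_walk_in_of_connected G (hconn j) hw0m.1 hxj
      refine ⟨Walk.cons hw0m.2 w, ?_⟩
      intro y hy
      rw [Walk.support_cons] at hy
      rcases List.mem_cons.mp hy with rfl | hy'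
      · exact hvB
      · exact Finset.mem_union_left _ (hw y hy')
    · obtain ⟨w, hw⟩ := hwalksB x hxB
      exact ⟨w, fun y hy => Finset.mem_union_right _ (hw y hy)⟩
  have hconnB : (G.induce (↑B : Set V)).Connected := aux_connected_of_walks G B v hvB hwalksBall
  set C' : Fin k → Finset V := fun l => if l = i then A else if l = j then B else C l
    with hC'def
  have hC'i : C' i = A := by simp [hC'def]
  have hC'j : C' j = B := by simp [hC'def, Ne.symm hij]
  have hC'other : ∀ l, l ≠ i → l ≠ j → C' l = C l := by
    intro l h1 h2; simp [hC'def, h1, h2]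
  have hApart : IsConnKPartition G C' := by
    refine ⟨?_, ?_, ?_, ?_⟩
    · intro l
      by_cases h1 : l = i
      · rw [h1, hC'i]; exact ⟨u, huA⟩
      by_cases h2 : l = j
      · rw [h2, hC'j]; exact (hne j).mono Finset.subset_union_left
      · rw [hC'other l h1 h2]; exact hne l
    · have dAB : Disjoint A B := by
        rw [hBdef]
        exact Finset.disjoint_union_right.mpr
          ⟨(hdisj i j hij).mono_left hACi, Finset.disjoint_sdiff⟩
      have dAother : ∀ m, m ≠ i → m ≠ j → Disjoint A (C m) := fun m h1 _ =>
        (hdisj i m (Ne.symm h1)).mono_left hACi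
      have dBother : ∀ m, m ≠ i → m ≠ j → Disjoint B (C m) := by
        intro m h1 h2
        rw [hBdef]
        exact Finset.disjoint_union_left.mpr
          ⟨hdisj j m (Ne.symm h2), (hdisj i m (Ne.symm h1)).mono_left Finset.sdiff_subset⟩
      intro l m hlm
      by_cases hl1 : l = i
      · subst hl1
        rw [hC'i]
        by_cases hm2 : m = j
        · rw [hm2, hC'j]; exact dAB
        · rw [hC'other m (Ne.symm hlm) hm2]; exact dAother m (Ne.symm hlm) hm2
      by_cases hl2 : l = j
      · subst hl2
        rw [hC'j]
        by_cases hm1 : m = i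
        · rw [hm1, hC'i]; exact dAB.symm
        · rw [hC'other m hm1 (Ne.symm hlm)]; exact dBother m hm1 (Ne.symm hlm)
      · rw [hC'other l hl1 hl2]
        by_cases hm1 : m = i
        · rw [hm1, hC'i]; exact (dAother l hl1 hl2).symm
        by_cases hm2 : m = j
        · rw [hm2, hC'j]; exact (dBother l hl1 hl2).symm
        · rw [hC'other m hm1 hm2]; exact hdisj l m hlm
    · intro x
      obtain ⟨l, hl⟩ := hcover x
      by_cases hl1 : l = i
      · rw [hl1] at hl
        by_cases hxA : x ∈ A
        · exact ⟨i, by rw [hC'i]; exact hxA⟩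
        · exact ⟨j, by
            rw [hC'j, hBdef]
            exact Finset.mem_union_right _ (Finset.mem_sdiff.mpr ⟨hl, hxA⟩)⟩
      by_cases hl2 : l = j
      · rw [hl2] at hl
        exact ⟨j, by rw [hC'j, hBdef]; exact Finset.mem_union_left _ hl⟩
      · exact ⟨l, by rw [hC'other l hl1 hl2]; exact hl⟩
    · intro l
      by_cases hl1 : l = i
      · rw [hl1, hC'i]; exact hconnA
      by_cases hl2 : l = j
      · rw [hl2, hC'j]; exact hconnB
      · rw [hC'other l hl1 hl2]; exact hconn l
  refine huniform C' hApart ?_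
  -- size computations
  have hci1 : 1 ≤ (C i).card := Finset.card_pos.mpr (hne i)
  have hAcardle : A.card ≤ (C i).card - 1 := hs0card ▸ Finset.card_le_card hAs0
  have hAlt : A.card < (C i).card := by omega
  have hBcard : B.card = (C j).card + ((C i).card - A.card) := by
    rw [hBdef, Finset.card_union_of_disjoint
      (((hdisj i j hij).symm).mono_right Finset.sdiff_subset), Finset.card_sdiff_of_subset hACi]
  -- multiset decomposition
  have hjmem : j ∈ (Finset.univ : Finset (Fin k)).val.erase i :=
    (Multiset.Nodup.mem_erase_iff Finset.univ.nodup).mpr ⟨Ne.symm hij, Finset.mem_univ j⟩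
  have h1 : (Finset.univ : Finset (Fin k)).val
      = i ::ₘ (Finset.univ : Finset (Fin k)).val.erase i :=
    (Multiset.cons_erase (Finset.mem_univ i)).symm
  have h2 : (Finset.univ : Finset (Fin k)).val.erase i
      = j ::ₘ ((Finset.univ : Finset (Fin k)).val.erase i).erase j :=
    (Multiset.cons_erase hjmem).symm
  set R := ((Finset.univ : Finset (Fin k)).val.erase i).erase j with hRdef
  have hRC' : Multiset.map (fun l => (C' l).card) R = Multiset.map (fun l => (C l).card) R := by
    refine Multiset.map_congr rfl ?_
    intro l hl
    have hlj : l ≠ j ∧ l ∈ (Finset.univ : Finset (Fin k)).val.erase i :=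
      (Multiset.Nodup.mem_erase_iff (Finset.univ.nodup.erase i)).mp hl
    have hli : l ≠ i := ((Multiset.Nodup.mem_erase_iff Finset.univ.nodup).mp hlj.2).1
    rw [hC'other l hli hlj.1]
  have hcount : ∀ (M : Multiset ℕ) (t : ℕ),
      (Multiset.sort M (· ≤ ·)).countP (· ≤ t) = Multiset.countP (fun n => n ≤ t) M := by
    intro M t
    conv_rhs => rw [← Multiset.sort_eq M (· ≤ ·)]
    rw [Multiset.coe_countP]
  have hexpand : ∀ (D : Fin k → Finset V) (t : ℕ),
      (sizeTuple D).countP (· ≤ t) =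
        Multiset.countP (fun n => n ≤ t) (Multiset.map (fun l => (D l).card) R)
          + (if (D j).card ≤ t then 1 else 0) + (if (D i).card ≤ t then 1 else 0) := by
    intro D t
    show (Multiset.sort _ (· ≤ ·)).countP (· ≤ t) = _
    rw [hcount, h1, h2, Multiset.map_cons, Multiset.map_cons,
      Multiset.countP_cons, Multiset.countP_cons]
  refine aux_lex_of_counts (sizeTuple C) (sizeTuple C')
    (Multiset.pairwise_sort _ _) (Multiset.pairwise_sort _ _) ?_ (C j).card ?_ ?_
  · show (Multiset.sort _ (· ≤ ·)).length = (Multiset.sort _ (· ≤ ·)).length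
    rw [Multiset.length_sort, Multiset.length_sort, Multiset.card_map, Multiset.card_map]
  · intro t ht
    rw [hexpand C t, hexpand C' t, hRC', hC'i, hC'j, hBcard]
    split_ifs <;> omega
  · rw [hexpand C _, hexpand C' _, hRC', hC'i, hC'j, hBcard]
    split_ifs <;> omega
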